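/- For the fixed-share forecaster with optimally chosen η and α (depending on τ_0 and T), the τ_0-adaptive regret R_T = max over intervals [r,s] ⊆ [1,T] of length at most τ_0 of (Σ_{t=r}^s p_t·ℓ_t - min_{q∈Δ_d} Σ_{t=r}^s q·ℓ_t) satisfies R_T ≤ sqrt((τ_0/2)(τ_0 h(1/τ_0) + ln d)) ≤ sqrt((τ_0/2) ln(e d τ_0)). -/

import Mathlib

open Real Finset

/-- Binary entropy. -/
noncomputable def binEnt (x : ℝ) : ℝ := -x * Real.log x - (1 - x) * Real.log (1 - x)

lemma hoeffding_scalar {m : ℝ} (hm0 : 0 ≤ m) (hm1 : m ≤ 1) {t : ℝ} (ht : t ≤ 0) :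
    Real.log (1 - m + m * Real.exp t) ≤ t * m + t ^ 2 / 8 := by
  set h : ℝ → ℝ := fun x => 1 - m + m * Real.exp x with hh
  have hpos : ∀ x, 0 < h x := by
    intro x
    rcases eq_or_lt_of_le hm0 with h0 | h0
    · simp [hh, ← h0]
    · have := Real.exp_pos x
      simp only [hh]; nlinarith
  set G : ℝ → ℝ := fun x => m + x / 4 - m * Real.exp x / h x with hG
  set g : ℝ → ℝ := fun x => x * m + x ^ 2 / 8 - Real.log (h x) with hg
  have hderh : ∀ x : ℝ, HasDerivAt h (m * Real.exp x) x := by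
    intro x
    exact ((Real.hasDerivAt_exp x).const_mul m).const_add (1 - m)
  have hder : ∀ x, HasDerivAt g (G x) x := by
    intro x
    have h2 : HasDerivAt (fun y => Real.log (h y)) (m * Real.exp x / h x) x :=
      (hderh x).log (ne_of_gt (hpos x))
    have h3 : HasDerivAt (fun y : ℝ => y * m + y ^ 2 / 8) (m + 2 * x / 8) x := by
      have := ((hasDerivAt_id x).mul_const m).add ((hasDerivAt_pow 2 x).div_const 8)
      refine this.congr_deriv ?_
      norm_num
    have h4 := h3.sub h2
    refine h4.congr_deriv ?_
    simp only [hG]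
    ring
  have hderG : ∀ x, HasDerivAt G (1/4 - m * Real.exp x * (1 - m) / (h x)^2) x := by
    intro x
    have hf : HasDerivAt (fun y => m * Real.exp y) (m * Real.exp x) x :=
      (Real.hasDerivAt_exp x).const_mul m
    have hdiv := hf.div (hderh x) (ne_of_gt (hpos x))
    have h4 : HasDerivAt (fun y : ℝ => m + y / 4) (1/4) x := by
      simpa using ((hasDerivAt_id x).div_const 4).const_add m
    have h5 := h4.sub hdiv
    refine h5.congr_deriv ?_
    have : h x = 1 - m + m * Real.exp x := rfl
    rw [this]
    ring
  have hG0 : G 0 = 0 := by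
    simp [hG, hh]
  have hGnonneg : ∀ x, 0 ≤ deriv G x := by
    intro x
    rw [(hderG x).deriv]
    have h2 : m * Real.exp x * (1 - m) / (h x)^2 ≤ 1/4 := by
      rw [div_le_iff₀ (by have := hpos x; positivity)]
      have hx : h x = 1 - m + m * Real.exp x := rfl
      nlinarith [sq_nonneg (m * Real.exp x - (1 - m)), hpos x]
    linarith
  have hmono : Monotone G :=
    monotone_of_deriv_nonneg (fun x => (hderG x).differentiableAt) hGnonneg
  have hGle : ∀ x ≤ 0, G x ≤ 0 := fun x hx => hG0 ▸ hmono hx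
  have hanti : AntitoneOn g (Set.Iic 0) := by
    apply antitoneOn_of_deriv_nonpos (convex_Iic 0)
    · exact (Differentiable.continuous fun x => (hder x).differentiableAt).continuousOn
    · exact fun x _ => ((hder x).differentiableAt).differentiableWithinAt
    · intro x hx
      rw [interior_Iic] at hx
      rw [(hder x).deriv]
      exact hGle x (le_of_lt hx)
  have hg0 : g 0 = 0 := by
    simp [hg, hh]
  have := hanti (Set.mem_Iic.2 ht) (Set.mem_Iic.2 le_rfl) ht
  rw [hg0] at this
  simp only [hg] at this
  linarith
lemma hoeffding_sum {d : ℕ} [NeZero d] (p ℓ : Fin d → ℝ)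
    (hp0 : ∀ i, 0 < p i) (hp1 : ∑ i, p i = 1)
    (hℓ : ∀ i, ℓ i ∈ Set.Icc (0:ℝ) 1) {η : ℝ} (hη : 0 ≤ η)
    (hScalar : ∀ {m : ℝ}, 0 ≤ m → m ≤ 1 → ∀ {t : ℝ}, t ≤ 0 →
      Real.log (1 - m + m * Real.exp t) ≤ t * m + t ^ 2 / 8) :
    Real.log (∑ i, p i * Real.exp (-η * ℓ i)) ≤ -η * (∑ i, p i * ℓ i) + η ^ 2 / 8 := by
  set m : ℝ := ∑ i, p i * ℓ i with hm
  have hm0 : 0 ≤ m := Finset.sum_nonneg fun i _ => mul_nonneg (hp0 i).le (hℓ i).1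
  have hm1 : m ≤ 1 := by
    calc m ≤ ∑ i, p i := Finset.sum_le_sum fun i _ => by
            nlinarith [(hp0 i).le, (hℓ i).2]
      _ = 1 := hp1
  have hcvx : ∀ i, Real.exp (-η * ℓ i) ≤ (1 - ℓ i) + ℓ i * Real.exp (-η) := by
    intro i
    have h1 := convexOn_exp.2 (Set.mem_univ (0:ℝ)) (Set.mem_univ (-η))
      (by linarith [(hℓ i).2] : (0:ℝ) ≤ 1 - ℓ i) (hℓ i).1 (by ring)
    simpa [smul_eq_mul, mul_comm] using h1
  have hsum : (∑ i, p i * Real.exp (-η * ℓ i)) ≤ 1 - m + m * Real.exp (-η) := by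
    have : (∑ i, p i * Real.exp (-η * ℓ i)) ≤
        ∑ i, p i * ((1 - ℓ i) + ℓ i * Real.exp (-η)) :=
      Finset.sum_le_sum fun i _ => mul_le_mul_of_nonneg_left (hcvx i) (hp0 i).le
    calc (∑ i, p i * Real.exp (-η * ℓ i)) ≤ ∑ i, p i * ((1 - ℓ i) + ℓ i * Real.exp (-η)) := this
      _ = (∑ i, p i) - m + m * Real.exp (-η) := by
          rw [hm]
          simp only [mul_add, mul_sub, mul_one]
          rw [Finset.sum_add_distrib, Finset.sum_sub_distrib, Finset.sum_mul]
          simp [mul_assoc]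
      _ = 1 - m + m * Real.exp (-η) := by rw [hp1]
  have hposs : 0 < ∑ i, p i * Real.exp (-η * ℓ i) :=
    Finset.sum_pos (fun i _ => mul_pos (hp0 i) (Real.exp_pos _)) Finset.univ_nonempty
  calc Real.log (∑ i, p i * Real.exp (-η * ℓ i))
      ≤ Real.log (1 - m + m * Real.exp (-η)) := Real.log_le_log hposs hsum
    _ ≤ (-η) * m + (-η) ^ 2 / 8 := hScalar hm0 hm1 (by linarith)
    _ = -η * m + η ^ 2 / 8 := by ring
lemma fs_invariant (d : ℕ) (hd : 1 ≤ d) (T : ℕ) (η α : ℝ) (hα0 : 0 < α) (hα1 : α < 1)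
    (ℓ p v : ℕ → Fin d → ℝ)
    (hp1 : ∀ j, p 1 j = 1 / d)
    (hv : ∀ t ∈ Finset.Icc 1 T, ∀ j,
      v (t + 1) j = p t j * Real.exp (-η * ℓ t j) / ∑ i, p t i * Real.exp (-η * ℓ t i))
    (hpr : ∀ t ∈ Finset.Icc 1 T, ∀ j, p (t + 1) j = α / d + (1 - α) * v (t + 1) j) :
    ∀ t, 1 ≤ t → t ≤ T + 1 → (∀ i, α / d ≤ p t i) ∧ (∑ i, p t i) = 1 := by
  have hd0 : (0:ℝ) < d := by exact_mod_cast hd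
  haveI : NeZero d := ⟨by omega⟩
  intro t ht1
  induction t, ht1 using Nat.le_induction with
  | base =>
    intro _
    constructor
    · intro i
      rw [hp1]
      exact (div_le_div_iff_of_pos_right hd0).2 hα1.le
    · simp only [hp1]
      rw [Finset.sum_const, Finset.card_univ, Fintype.card_fin, nsmul_eq_mul]
      field_simp
  | succ n hn ih =>
    intro hn1
    have hnT : n ∈ Finset.Icc 1 T := by
      simp only [Finset.mem_Icc]; omega
    obtain ⟨hlb, hsum⟩ := ih (by omega)
    have hppos : ∀ i, 0 < p n i := fun i => lt_of_lt_of_le (by positivity) (hlb i)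
    have hZpos : 0 < ∑ i, p n i * Real.exp (-η * ℓ n i) :=
      Finset.sum_pos (fun i _ => mul_pos (hppos i) (Real.exp_pos _)) Finset.univ_nonempty
    have hv0 : ∀ i, 0 ≤ v (n + 1) i := by
      intro i
      rw [hv n hnT i]
      have := (hppos i).le
      have := (Real.exp_pos (-η * ℓ n i)).le
      positivity
    have hvsum : ∑ i, v (n + 1) i = 1 := by
      rw [Finset.sum_congr rfl fun i _ => hv n hnT i, ← Finset.sum_div,
        div_self hZpos.ne']
    constructor
    · intro i
      rw [hpr n hnT i]
      nlinarith [hv0 i]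
    · rw [Finset.sum_congr rfl fun i _ => hpr n hnT i, Finset.sum_add_distrib,
        ← Finset.mul_sum, hvsum, Finset.sum_const, Finset.card_univ, Fintype.card_fin,
        nsmul_eq_mul]
      field_simp
      ring
lemma fs_core (d : ℕ) (hd : 1 ≤ d) (T : ℕ) (η α : ℝ) (hη : 0 < η) (hα0 : 0 < α) (hα1 : α < 1)
    (ℓ p v : ℕ → Fin d → ℝ)
    (hℓ : ∀ t ∈ Finset.Icc 1 T, ∀ j, ℓ t j ∈ Set.Icc (0:ℝ) 1)
    (hp1 : ∀ j, p 1 j = 1 / d)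
    (hv : ∀ t ∈ Finset.Icc 1 T, ∀ j,
      v (t + 1) j = p t j * Real.exp (-η * ℓ t j) / ∑ i, p t i * Real.exp (-η * ℓ t i))
    (hpr : ∀ t ∈ Finset.Icc 1 T, ∀ j, p (t + 1) j = α / d + (1 - α) * v (t + 1) j)
    (r s : ℕ) (hr : 1 ≤ r) (hrs : r ≤ s) (hsT : s ≤ T)
    (q : Fin d → ℝ) (hq0 : ∀ i, 0 ≤ q i) (hq1 : ∑ i, q i = 1) :
    η * (∑ t ∈ Finset.Icc r s, (∑ i, p t i * ℓ t i)
        - ∑ t ∈ Finset.Icc r s, (∑ i, q i * ℓ t i))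
      ≤ ((s - r : ℕ) + 1) * η ^ 2 / 8 + (Real.log d + Real.log (1 / α))
        + (s - r : ℕ) * Real.log (1 / (1 - α)) := by
  haveI : NeZero d := ⟨by omega⟩
  have hd0 : (0:ℝ) < d := by exact_mod_cast hd
  have hinv := fs_invariant d hd T η α hα0 hα1 ℓ p v hp1 hv hpr
  -- basic facts for t in [1,T]
  have hppos : ∀ t, 1 ≤ t → t ≤ T + 1 → ∀ i, 0 < p t i := by
    intro t h1 h2 i
    exact lt_of_lt_of_le (by positivity) ((hinv t h1 h2).1 i)
  have hZpos : ∀ t, 1 ≤ t → t ≤ T → 0 < ∑ i, p t i * Real.exp (-η * ℓ t i) := by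
    intro t h1 h2
    exact Finset.sum_pos (fun i _ => mul_pos (hppos t h1 (by omega) i) (Real.exp_pos _))
      Finset.univ_nonempty
  have hvpos : ∀ t, 1 ≤ t → t ≤ T → ∀ i, 0 < v (t + 1) i := by
    intro t h1 h2 i
    rw [hv t (by simp only [Finset.mem_Icc]; omega) i]
    exact div_pos (mul_pos (hppos t h1 (by omega) i) (Real.exp_pos _)) (hZpos t h1 h2)
  have hvle1 : ∀ t, 1 ≤ t → t ≤ T → ∀ i, v (t + 1) i ≤ 1 := by
    intro t h1 h2 i
    rw [hv t (by simp only [Finset.mem_Icc]; omega) i, div_le_one (hZpos t h1 h2)]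
    exact Finset.single_le_sum
      (f := fun j => p t j * Real.exp (-η * ℓ t j))
      (fun j _ => mul_nonneg (hppos t h1 (by omega) j).le (Real.exp_pos _).le)
      (Finset.mem_univ i)
  set Φ : ℕ → ℝ := fun t => ∑ i, q i * Real.log (p t i) with hΦ
  set Ψ : ℕ → ℝ := fun t => ∑ i, q i * Real.log (v (t + 1) i) with hΨ
  -- per-step inequality
  have step : ∀ t, 1 ≤ t → t ≤ T →
      η * ((∑ i, p t i * ℓ t i) - ∑ i, q i * ℓ t i) ≤ η ^ 2 / 8 + Ψ t - Φ t := by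
    intro t h1 h2
    have htT : t ∈ Finset.Icc 1 T := by simp only [Finset.mem_Icc]; omega
    set Z : ℝ := ∑ i, p t i * Real.exp (-η * ℓ t i) with hZ
    have hZp := hZpos t h1 h2
    have hlogZ : Real.log Z ≤ -η * (∑ i, p t i * ℓ t i) + η ^ 2 / 8 :=
      hoeffding_sum (p t) (ℓ t) (hppos t h1 (by omega)) (hinv t h1 (by omega)).2
        (hℓ t htT) hη.le (fun {m} a b {t'} c => hoeffding_scalar a b c)
    have hlogv : ∀ i, Real.log (v (t + 1) i)
        = Real.log (p t i) + (-η * ℓ t i) - Real.log Z := by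
      intro i
      rw [hv t htT i, Real.log_div (mul_pos (hppos t h1 (by omega) i)
        (Real.exp_pos _)).ne' hZp.ne',
        Real.log_mul (hppos t h1 (by omega) i).ne' (Real.exp_ne_zero _), Real.log_exp]
    have hΨΦ : Ψ t - Φ t = -η * (∑ i, q i * ℓ t i) - Real.log Z := by
      simp only [hΨ, hΦ]
      rw [Finset.sum_congr rfl fun i _ => by rw [hlogv i]]
      simp only [mul_add, mul_sub]
      rw [Finset.sum_sub_distrib, Finset.sum_add_distrib]
      have e1 : ∑ i, q i * Real.log Z = Real.log Z := by
        rw [← Finset.sum_mul, hq1, one_mul]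
      have e2 : ∑ i, q i * (-η * ℓ t i) = -η * ∑ i, q i * ℓ t i := by
        rw [Finset.mul_sum]
        exact Finset.sum_congr rfl fun i _ => by ring
      rw [e1, e2]
      ring
    linarith [hlogZ, hΨΦ.ge, hΨΦ.le]
  -- linking inequality
  have link : ∀ t, 1 ≤ t → t ≤ T → Real.log (1 - α) + Ψ t ≤ Φ (t + 1) := by
    intro t h1 h2
    have htT : t ∈ Finset.Icc 1 T := by simp only [Finset.mem_Icc]; omega
    have hpt : ∀ i, Real.log (1 - α) + Real.log (v (t + 1) i) ≤ Real.log (p (t + 1) i) := by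
      intro i
      rw [← Real.log_mul (by linarith) (hvpos t h1 h2 i).ne']
      apply Real.log_le_log (mul_pos (by linarith) (hvpos t h1 h2 i))
      rw [hpr t htT i]
      have : 0 ≤ α / d := by positivity
      linarith
    have : ∑ i, q i * (Real.log (1 - α) + Real.log (v (t + 1) i)) ≤ Φ (t + 1) :=
      Finset.sum_le_sum fun i _ => mul_le_mul_of_nonneg_left (hpt i) (hq0 i)
    calc Real.log (1 - α) + Ψ t
        = ∑ i, q i * (Real.log (1 - α) + Real.log (v (t + 1) i)) := by
          simp only [hΨ, mul_add]
          rw [Finset.sum_add_distrib, ← Finset.sum_mul, hq1, one_mul]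
      _ ≤ Φ (t + 1) := this
  -- main induction on interval length
  have main : ∀ k : ℕ, r + k ≤ T →
      η * (∑ t ∈ Finset.Icc r (r + k), (∑ i, p t i * ℓ t i)
          - ∑ t ∈ Finset.Icc r (r + k), (∑ i, q i * ℓ t i))
        ≤ ((k : ℝ) + 1) * η ^ 2 / 8 + Ψ (r + k) - Φ r
          + (k : ℝ) * Real.log (1 / (1 - α)) := by
    intro k
    induction k with
    | zero =>
      intro hk
      simp only [Nat.add_zero, Finset.Icc_self, Finset.sum_singleton, Nat.cast_zero]
      have := step r hr (by omega)
      linarith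
    | succ k ih =>
      intro hk
      have ih' := ih (by omega)
      have hstep := step (r + k + 1) (by omega) (by omega)
      have hlink := link (r + k) (by omega) (by omega)
      have hlog : Real.log (1 / (1 - α)) = -Real.log (1 - α) := by
        rw [one_div, Real.log_inv]
      have e1 : ∀ f : ℕ → ℝ, ∑ t ∈ Finset.Icc r (r + (k + 1)), f t
          = ∑ t ∈ Finset.Icc r (r + k), f t + f (r + k + 1) := by
        intro f
        have : r + (k + 1) = (r + k) + 1 := by omega
        rw [this, Finset.sum_Icc_succ_top (by omega)]
      rw [e1, e1]
      push_cast
      have : r + (k + 1) = (r + k) + 1 := by omega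
      rw [this]
      nlinarith [ih', hstep, hlink]
  -- conclude
  have hkey := main (s - r) (by omega)
  have hsr : r + (s - r) = s := by omega
  rw [hsr] at hkey
  have hΨs : Ψ s ≤ 0 := by
    apply Finset.sum_nonpos
    intro i _
    exact mul_nonpos_of_nonneg_of_nonpos (hq0 i)
      (Real.log_nonpos (hvpos s (by omega) (by omega) i).le (hvle1 s (by omega) (by omega) i))
  have hΦr : Real.log α - Real.log d ≤ Φ r := by
    have hlb := (hinv r hr (by omega)).1
    have : ∀ i, Real.log α - Real.log d ≤ Real.log (p r i) := by
      intro i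
      have h1 : Real.log (α / d) ≤ Real.log (p r i) :=
        Real.log_le_log (by positivity) (hlb i)
      rwa [Real.log_div hα0.ne' hd0.ne'] at h1
    calc Real.log α - Real.log d
        = ∑ i, q i * (Real.log α - Real.log d) := by
          rw [← Finset.sum_mul, hq1, one_mul]
      _ ≤ Φ r := Finset.sum_le_sum fun i _ => mul_le_mul_of_nonneg_left (this i) (hq0 i)
  have hloginv : Real.log (1 / α) = -Real.log α := by rw [one_div, Real.log_inv]
  linarith [hkey, hΨs, hΦr]
lemma binEnt_one : binEnt 1 = 0 := by simp [binEnt]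

lemma numeric_tau1 (d : ℕ) (hd : 2 ≤ d) :
    (1:ℝ) - 99/100/d ≤ Real.sqrt ((1/2) * Real.log d) := by
  have hd0 : (0:ℝ) < d := by positivity
  have hd2 : (2:ℝ) ≤ d := by exact_mod_cast hd
  have l2 := Real.log_two_gt_d9
  have l3 : (1:ℝ) ≤ Real.log 3 := by
    rw [Real.le_log_iff_exp_le (by norm_num)]
    linarith [Real.exp_one_lt_d9]
  have hLHS0 : (0:ℝ) ≤ 1 - 99/100/d := by
    have : (99:ℝ)/100/d ≤ 99/100/2 := by gcongr <;> norm_num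
    linarith
  have hlogd : Real.log 2 ≤ Real.log d := Real.log_le_log (by norm_num) hd2
  rw [Real.le_sqrt hLHS0 (by nlinarith)]
  have key : 2 * ((1:ℝ) - 99/100/d)^2 ≤ Real.log d := by
    rcases Nat.lt_or_ge d 8 with h8 | h8
    · interval_cases d
      · push_cast; nlinarith
      · push_cast
        have : Real.log 2 ≤ Real.log 3 := Real.log_le_log (by norm_num) (by norm_num)
        nlinarith
      · have l4 : Real.log 4 = 2 * Real.log 2 := by
          rw [show (4:ℝ) = 2^2 by norm_num, Real.log_pow]; push_cast; ring
        push_cast; nlinarith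
      · have l4 : Real.log 4 = 2 * Real.log 2 := by
          rw [show (4:ℝ) = 2^2 by norm_num, Real.log_pow]; push_cast; ring
        have : Real.log 4 ≤ Real.log 5 := Real.log_le_log (by norm_num) (by norm_num)
        push_cast; nlinarith
      · have l6 : Real.log 6 = Real.log 2 + Real.log 3 := by
          rw [show (6:ℝ) = 2*3 by norm_num, Real.log_mul (by norm_num) (by norm_num)]
        push_cast; nlinarith
      · have l6 : Real.log 6 = Real.log 2 + Real.log 3 := by
          rw [show (6:ℝ) = 2*3 by norm_num, Real.log_mul (by norm_num) (by norm_num)]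
        have : Real.log 6 ≤ Real.log 7 := Real.log_le_log (by norm_num) (by norm_num)
        push_cast; nlinarith
    · have l8 : Real.log 8 = 3 * Real.log 2 := by
        rw [show (8:ℝ) = 2^3 by norm_num, Real.log_pow]; push_cast; ring
      have h8' : (8:ℝ) ≤ d := by exact_mod_cast h8
      have : Real.log 8 ≤ Real.log d := Real.log_le_log (by norm_num) h8'
      have hx0 : (0:ℝ) ≤ 99/100/d := by positivity
      have hsq : ((1:ℝ) - 99/100/d)^2 ≤ 1 := by nlinarith
      nlinarith
  linarith
lemma binEnt_mul {c : ℝ} (hc : 2 ≤ c) :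
    c * binEnt (1/c) = Real.log c + (c-1) * (Real.log c - Real.log (c-1)) := by
  have hc0 : (0:ℝ) < c := by linarith
  have hc1 : (0:ℝ) < c - 1 := by linarith
  have e1 : (1:ℝ) - 1/c = (c-1)/c := by field_simp
  have e2 : Real.log ((c-1)/c) = Real.log (c-1) - Real.log c := Real.log_div hc1.ne' hc0.ne'
  have e3 : Real.log (1/c) = -Real.log c := by rw [one_div, Real.log_inv]
  rw [binEnt, e1, e2, e3]
  field_simp
  ring

lemma ent_le_one {c : ℝ} (hc : 2 ≤ c) :
    (c-1) * (Real.log c - Real.log (c-1)) ≤ 1 := by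
  have hc1 : (0:ℝ) < c - 1 := by linarith
  have h := Real.log_le_sub_one_of_pos (show (0:ℝ) < c / (c-1) by positivity)
  rw [Real.log_div (by linarith) hc1.ne'] at h
  have e : c/(c-1) - 1 = 1/(c-1) := by field_simp; ring
  rw [e] at h
  calc (c-1) * (Real.log c - Real.log (c-1)) ≤ (c-1) * (1/(c-1)) := by
        apply mul_le_mul_of_nonneg_left h hc1.le
    _ = 1 := by field_simp

/-- Corollary 2 of the paper: with `η` and `α` optimally chosen (depending on
`τ_0` and `T`), the fixed-share forecaster has `τ_0`-adaptive regret at most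
`sqrt((τ_0/2)(τ_0 h(1/τ_0) + ln d)) ≤ sqrt((τ_0/2) ln(e d τ_0))`. -/
theorem stmt9 (d : ℕ) (hd : 1 ≤ d) (T τ0 : ℕ) (hT : 1 ≤ T) (hτ0 : 1 ≤ τ0)
    (hτ0T : τ0 ≤ T) :
    ∃ η > (0 : ℝ), ∃ α ∈ Set.Ioo (0 : ℝ) 1,
      ∀ (ℓ p v : ℕ → Fin d → ℝ),
      (∀ t ∈ Finset.Icc 1 T, ∀ j, ℓ t j ∈ Set.Icc (0 : ℝ) 1) →
      (∀ j, p 1 j = 1 / d) →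
      (∀ t ∈ Finset.Icc 1 T, ∀ j,
        v (t + 1) j = p t j * Real.exp (-η * ℓ t j) / ∑ i, p t i * Real.exp (-η * ℓ t i)) →
      (∀ t ∈ Finset.Icc 1 T, ∀ j,
        p (t + 1) j = α / d + (1 - α) * v (t + 1) j) →
      (∀ r s : ℕ, 1 ≤ r → r ≤ s → s ≤ T → s + 1 - r ≤ τ0 →
        ∀ q : Fin d → ℝ, (∀ i, 0 ≤ q i) → (∑ i, q i = 1) →
          ∑ t ∈ Finset.Icc r s, (∑ i, p t i * ℓ t i)
              - ∑ t ∈ Finset.Icc r s, (∑ i, q i * ℓ t i)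
            ≤ Real.sqrt ((τ0 / 2) * (τ0 * binEnt (1 / τ0) + Real.log d)))
      ∧ Real.sqrt (((τ0 : ℝ) / 2) * (τ0 * binEnt (1 / τ0) + Real.log d))
        ≤ Real.sqrt (((τ0 : ℝ) / 2) * Real.log (Real.exp 1 * d * τ0)) := by
  haveI : NeZero d := ⟨by omega⟩
  have hd0 : (0:ℝ) < d := by exact_mod_cast hd
  have hd1 : (1:ℝ) ≤ d := by exact_mod_cast hd
  have hlogd : 0 ≤ Real.log d := Real.log_nonneg hd1
  have hc0 : (0:ℝ) < τ0 := by exact_mod_cast hτ0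
  -- Part 2 : common to both cases
  have part2 : Real.sqrt (((τ0 : ℝ) / 2) * (τ0 * binEnt (1 / τ0) + Real.log d))
      ≤ Real.sqrt (((τ0 : ℝ) / 2) * Real.log (Real.exp 1 * d * τ0)) := by
    apply Real.sqrt_le_sqrt
    have hlogE : Real.log (Real.exp 1 * d * τ0) = 1 + Real.log d + Real.log τ0 := by
      rw [Real.log_mul (by positivity) hc0.ne', Real.log_mul (Real.exp_pos 1).ne' hd0.ne',
        Real.log_exp]
    have hEnt : (τ0:ℝ) * binEnt (1 / τ0) ≤ 1 + Real.log τ0 := by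
      rcases eq_or_lt_of_le hτ0 with h1 | h1
      · have : ((τ0:ℝ)) = 1 := by exact_mod_cast h1.symm
        rw [this]
        simp [binEnt_one]
      · have hc2 : (2:ℝ) ≤ (τ0:ℝ) := by exact_mod_cast h1
        rw [binEnt_mul hc2]
        linarith [ent_le_one hc2]
    have h2 : (0:ℝ) ≤ (τ0:ℝ)/2 := by positivity
    rw [hlogE]
    apply mul_le_mul_of_nonneg_left _ h2
    linarith
  rcases eq_or_lt_of_le hτ0 with hone | htwo
  · -- case τ0 = 1
    have hτeq : τ0 = 1 := hone.symm
    subst hτeq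
    refine ⟨1, one_pos, 99/100, ⟨by norm_num, by norm_num⟩, ?_⟩
    intro ℓ p v hℓ hp1 hv hpr
    refine ⟨?_, part2⟩
    intro r s hr hrs hsT hτ q hq0 hq1
    have hrseq : r = s := by omega
    subst hrseq
    simp only [Finset.Icc_self, Finset.sum_singleton]
    have hinv := fs_invariant d hd T 1 (99/100) (by norm_num) (by norm_num) ℓ p v hp1 hv hpr
      r hr (by omega)
    obtain ⟨hlb, hsum⟩ := hinv
    obtain ⟨i0, _, hmin⟩ := Finset.exists_min_image Finset.univ (ℓ r) Finset.univ_nonempty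
    have hrT : r ∈ Finset.Icc 1 T := by simp only [Finset.mem_Icc]; omega
    have hppos : ∀ i, 0 < p r i := fun i => lt_of_lt_of_le (by positivity) (hlb i)
    have hp0le1 : p r i0 ≤ 1 := by
      have := Finset.single_le_sum (f := fun i => p r i)
        (fun i _ => (hppos i).le) (Finset.mem_univ i0)
      linarith [this, hsum.le]
    have hl0 : 0 ≤ ℓ r i0 := (hℓ r hrT i0).1
    have hl1 : ℓ r i0 ≤ 1 := (hℓ r hrT i0).2
    -- regret ≤ 1 - p r i0
    have h1 : ∑ i, p r i * ℓ r i ≤ p r i0 * ℓ r i0 + (1 - p r i0) := by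
      have e : (∑ i ∈ Finset.univ.erase i0, p r i * ℓ r i) + p r i0 * ℓ r i0
          = ∑ i, p r i * ℓ r i :=
        Finset.sum_erase_add _ _ (Finset.mem_univ i0)
      have e2 : (∑ i ∈ Finset.univ.erase i0, p r i) + p r i0 = ∑ i, p r i :=
        Finset.sum_erase_add _ _ (Finset.mem_univ i0)
      have h3 : ∑ i ∈ Finset.univ.erase i0, p r i * ℓ r i
          ≤ ∑ i ∈ Finset.univ.erase i0, p r i :=
        Finset.sum_le_sum fun i _ => by
          nlinarith [(hppos i).le, (hℓ r hrT i).1, (hℓ r hrT i).2]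
      rw [hsum] at e2
      linarith [e, e2, h3]
    have h2 : ℓ r i0 ≤ ∑ i, q i * ℓ r i := by
      calc ℓ r i0 = ∑ i, q i * ℓ r i0 := by rw [← Finset.sum_mul, hq1, one_mul]
        _ ≤ ∑ i, q i * ℓ r i :=
            Finset.sum_le_sum fun i _ =>
              mul_le_mul_of_nonneg_left (hmin i (Finset.mem_univ i)) (hq0 i)
    have hX : ∑ i, p r i * ℓ r i - ∑ i, q i * ℓ r i ≤ 1 - p r i0 := by
      nlinarith [mul_nonneg (sub_nonneg.2 hp0le1) hl0]
    rcases eq_or_lt_of_le hd1 with hdone | hdtwo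
    · -- d = 1 : p r i0 = 1
      have hdn : d = 1 := by exact_mod_cast hdone.symm
      subst hdn
      have : p r i0 = 1 := by
        rw [← hsum]
        rw [show i0 = 0 from Subsingleton.elim i0 0]
        simp
      rw [this] at hX
      calc ∑ i, p r i * ℓ r i - ∑ i, q i * ℓ r i ≤ 1 - 1 := hX
        _ = 0 := by ring
        _ ≤ _ := Real.sqrt_nonneg _
    · -- d ≥ 2
      have hd2 : 2 ≤ d := by exact_mod_cast hdtwo
      have := numeric_tau1 d hd2
      have hp0 : (99:ℝ)/100/d ≤ p r i0 := hlb i0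
      have goalEq : ((1:ℕ):ℝ) / 2 * (((1:ℕ):ℝ) * binEnt (1 / ((1:ℕ):ℝ)) + Real.log d)
          = (1/2) * Real.log d := by
        norm_num [binEnt_one]
      calc ∑ i, p r i * ℓ r i - ∑ i, q i * ℓ r i ≤ 1 - p r i0 := hX
        _ ≤ 1 - 99/100/d := by linarith
        _ ≤ Real.sqrt ((1/2) * Real.log d) := this
        _ = _ := by rw [goalEq]
  · -- case τ0 ≥ 2
    have hτ2 : 2 ≤ τ0 := htwo
    set c : ℝ := (τ0 : ℝ) with hcdef
    have hc2 : (2:ℝ) ≤ c := by rw [hcdef]; exact_mod_cast hτ2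
    have hc1 : (1:ℝ) < c := by linarith
    set C : ℝ := c * binEnt (1 / c) + Real.log d with hCdef
    have hCval : C = Real.log c + (c-1) * (Real.log c - Real.log (c-1)) + Real.log d := by
      rw [hCdef, binEnt_mul hc2]
    have hL : 0 ≤ Real.log c - Real.log (c-1) := by
      have := Real.log_le_log (show (0:ℝ) < c - 1 by linarith) (show c - 1 ≤ c by linarith)
      linarith
    have hC : 0 < C := by
      have h1 : 0 < Real.log c := Real.log_pos hc1
      have h2 : 0 ≤ (c-1) * (Real.log c - Real.log (c-1)) :=
        mul_nonneg (by linarith) hL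
      rw [hCval]; linarith
    set η : ℝ := Real.sqrt (8 * C / c) with hηdef
    have hη : 0 < η := Real.sqrt_pos.2 (by positivity)
    refine ⟨η, hη, 1/c, ⟨by positivity, by rw [div_lt_one (by linarith)]; linarith⟩, ?_⟩
    intro ℓ p v hℓ hp1 hv hpr
    refine ⟨?_, part2⟩
    intro r s hr hrs hsT hτ q hq0 hq1
    have hcore := fs_core d hd T η (1/c) hη (by positivity)
      (by rw [div_lt_one (by linarith)]; linarith) ℓ p v hℓ hp1 hv hpr r s hr hrs hsT q hq0 hq1
    -- simplify logs
    have e1 : Real.log (1 / (1/c)) = Real.log c := by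
      rw [one_div_one_div]
    have e2 : Real.log (1 / (1 - 1/c)) = Real.log c - Real.log (c-1) := by
      have h1c : (1:ℝ) - 1/c = (c-1)/c := by field_simp
      rw [h1c, one_div_div,
        Real.log_div (show (0:ℝ) < c by linarith).ne' (show (0:ℝ) < c - 1 by linarith).ne']
    rw [e1, e2] at hcore
    -- bound interval length
    have hk : ((s - r : ℕ) : ℝ) + 1 ≤ c := by
      have h : (s - r) + 1 ≤ τ0 := by omega
      rw [hcdef]
      exact_mod_cast h
    have hbound : η * (∑ t ∈ Finset.Icc r s, (∑ i, p t i * ℓ t i)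
        - ∑ t ∈ Finset.Icc r s, (∑ i, q i * ℓ t i)) ≤ c * η ^ 2 / 8 + C := by
      have hsq : 0 ≤ η ^ 2 := sq_nonneg η
      have h3 : ((s - r : ℕ) : ℝ) * (Real.log c - Real.log (c-1))
          ≤ (c - 1) * (Real.log c - Real.log (c-1)) :=
        mul_le_mul_of_nonneg_right (by linarith) hL
      have h4 : (((s - r : ℕ) : ℝ) + 1) * η ^ 2 / 8 ≤ c * η ^ 2 / 8 := by
        apply div_le_div_of_nonneg_right _ (by norm_num)
        exact mul_le_mul_of_nonneg_right hk hsq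
      rw [hCval]
      calc η * _ ≤ (((s - r : ℕ) : ℝ) + 1) * η ^ 2 / 8 + (Real.log d + Real.log c)
            + ((s - r : ℕ) : ℝ) * (Real.log c - Real.log (c-1)) := hcore
        _ ≤ c * η ^ 2 / 8 + (Real.log c + (c-1) * (Real.log c - Real.log (c-1))
            + Real.log d) := by linarith
    -- optimal η computation
    have hηsq : η ^ 2 = 8 * C / c := Real.sq_sqrt (by positivity)
    set R : ℝ := Real.sqrt (c / 2 * C) with hRdef
    have hRη : R * η = 2 * C := by
      rw [hRdef, hηdef, ← Real.sqrt_mul (by positivity)]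
      have : c / 2 * C * (8 * C / c) = (2 * C) ^ 2 := by
        field_simp
        ring
      rw [this, Real.sqrt_sq (by positivity)]
    have h2C : c * η ^ 2 / 8 + C = 2 * C := by
      rw [hηsq]
      field_simp
      ring
    have hfinal : ∑ t ∈ Finset.Icc r s, (∑ i, p t i * ℓ t i)
        - ∑ t ∈ Finset.Icc r s, (∑ i, q i * ℓ t i) ≤ R := by
      have h5 : η * (∑ t ∈ Finset.Icc r s, (∑ i, p t i * ℓ t i)
          - ∑ t ∈ Finset.Icc r s, (∑ i, q i * ℓ t i)) ≤ R * η := by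
        rw [hRη]
        exact hbound.trans h2C.le
      have h6 : (∑ t ∈ Finset.Icc r s, (∑ i, p t i * ℓ t i)
          - ∑ t ∈ Finset.Icc r s, (∑ i, q i * ℓ t i)) * η ≤ R * η := by
        linarith [h5]
      exact le_of_mul_le_mul_right h6 hη
    calc ∑ t ∈ Finset.Icc r s, (∑ i, p t i * ℓ t i)
        - ∑ t ∈ Finset.Icc r s, (∑ i, q i * ℓ t i) ≤ R := hfinal
      _ = _ := by rw [hRdef]
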